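/- For every integer k ≥ 1, 1 + 2·sin(π/(4k+8)) / (cos(π/(4k+8)) − sin(π/(4k+8))) < 1 + 2·tan(π/(4k+4)) + 2·tan²(π/(4k+4)). -/

import Mathlib

open Real

set_option maxHeartbeats 1000000

theorem ub_4kplus8_lt_lb_4kplus4 (k : ℕ) (hk : 1 ≤ k) :
    1 + 2 * sin (π / (4 * (k : ℝ) + 8)) /
        (cos (π / (4 * (k : ℝ) + 8)) - sin (π / (4 * (k : ℝ) + 8))) <
      1 + 2 * tan (π / (4 * (k : ℝ) + 4)) + 2 * tan (π / (4 * (k : ℝ) + 4)) ^ 2 := by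
  have hk' : (1 : ℝ) ≤ (k : ℝ) := by exact_mod_cast hk
  set c : ℝ := 4 * (k : ℝ) + 8 with hc
  have hc12 : (12 : ℝ) ≤ c := by linarith
  have hcpos : (0 : ℝ) < c := by linarith
  have hc4 : (0 : ℝ) < c - 4 := by linarith
  have hπ : 0 < π := pi_pos
  have hπlt : π < 3.15 := pi_lt_d2
  have hπgt : 3.14 < π := pi_gt_d2
  set θ : ℝ := π / c with hθ
  have hθpos : 0 < θ := div_pos hπ hcpos
  have hθle : θ ≤ π / 12 := by
    rw [hθ, div_le_div_iff₀ hcpos (by norm_num)]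
    nlinarith
  have hθlt1 : θ < 0.27 := by
    rw [hθ, div_lt_iff₀ hcpos]; nlinarith
  -- cos θ lower bound
  have hcos : 1 - θ ^ 2 / 2 ≤ cos θ := one_sub_sq_div_two_le_cos
  have hcosθ : 0.9 < cos θ := by nlinarith
  have hsin : sin θ < θ := sin_lt hθpos
  have hsinpos : 0 < sin θ := sin_pos_of_pos_of_lt_pi hθpos (by nlinarith)
  have hden2 : 0 < cos θ - θ := by nlinarith
  have hden1 : 0 < cos θ - sin θ := by nlinarith
  -- step 1 : sin θ / (cos θ - sin θ) < θ / (cos θ - θ)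
  have step1 : sin θ / (cos θ - sin θ) < θ / (cos θ - θ) := by
    rw [div_lt_div_iff₀ hden1 hden2]
    nlinarith
  -- step 2 : θ / (cos θ - θ) < π / (c - 4)
  have step2 : θ / (cos θ - θ) < π / (c - 4) := by
    rw [div_lt_div_iff₀ hden2 hc4]
    have hcθ : c * θ = π := by
      rw [hθ]; field_simp
    -- need θ * (c - 4) < π * (cos θ - θ), i.e. c * cos θ > c - 4 + π
    have key : c - 4 + π < c * cos θ := by
      have h1 : c * (1 - θ ^ 2 / 2) ≤ c * cos θ :=
        mul_le_mul_of_nonneg_left hcos (le_of_lt hcpos)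
      have h2 : c * θ ^ 2 = π * θ := by rw [← hcθ]; ring
      have h3 : θ ≤ π / 12 := hθle
      -- c * (1 - θ²/2) = c - π*θ/2 ≥ c - π²/24
      have h4 : π * θ ≤ π ^ 2 / 12 := by
        have := mul_le_mul_of_nonneg_left h3 (le_of_lt hπ)
        nlinarith
      nlinarith
    have key2 : (c - 4 + π) * θ < π * cos θ := by
      calc (c - 4 + π) * θ < c * cos θ * θ :=
            mul_lt_mul_of_pos_right key hθpos
        _ = c * θ * cos θ := by ring
        _ = π * cos θ := by rw [hcθ]
    have e1 : (c - 4 + π) * θ = π - 4 * θ + π * θ := by linear_combination hcθ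
    have e2 : θ * (c - 4) = π - 4 * θ := by linear_combination hcθ
    rw [e2]
    rw [e1] at key2
    nlinarith [key2]
  set φ : ℝ := π / (4 * (k : ℝ) + 4) with hφ
  have hφeq : φ = π / (c - 4) := by rw [hφ, hc]; ring_nf
  have hφpos : 0 < φ := div_pos hπ (by linarith)
  have hφlt : φ < π / 2 := by
    rw [hφ, div_lt_div_iff₀ (by linarith) (by norm_num)]
    nlinarith
  -- step 3 : φ < tan φ
  have step3 : φ < tan φ := lt_tan hφpos hφlt
  have htansq : 0 ≤ tan φ ^ 2 := sq_nonneg _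
  have chain : sin θ / (cos θ - sin θ) < tan φ := by
    calc sin θ / (cos θ - sin θ) < θ / (cos θ - θ) := step1
      _ < π / (c - 4) := step2
      _ = φ := hφeq.symm
      _ < tan φ := step3
  have hassoc : 2 * sin θ / (cos θ - sin θ) = 2 * (sin θ / (cos θ - sin θ)) :=
    mul_div_assoc 2 _ _
  rw [hassoc]
  linarith
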